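/- arXiv:2604.04286 — 2 statements merged into one kernel-verified Lean document; each statement's English description precedes it below -/
import Mathlib

section
/- Suppose s : ℝ≥0 → ℝⁿ and θ̃ : ℝ≥0 → ℝᵖ are differentiable, M(t) is a symmetric matrix-valued function, Γ ≻ 0 constant, K_s ≻ 0, and V(t) = ½ s(t)ᵀ M(t) s(t) + ½ θ̃(t)ᵀ Γ⁻¹ θ̃(t) satisfies the closed-loop identities M ṡ = -K_s s + P Y θ̃ - C s with P s = s, (d/dt)θ̃ = -Γ Yᵀ P s, and sᵀ(Ṁ - 2C)s = 0. Then V̇(t) = -s(t)ᵀ K_s s(t) ≤ 0 for all t. -/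
open Matrix

lemma hasDerivAt_dot {n : ℕ} {f g : ℝ → Fin n → ℝ} {f' g' : Fin n → ℝ} {t : ℝ}
    (hf : ∀ i, HasDerivAt (fun τ => f τ i) (f' i) t)
    (hg : ∀ i, HasDerivAt (fun τ => g τ i) (g' i) t) :
    HasDerivAt (fun τ => f τ ⬝ᵥ g τ) (f' ⬝ᵥ g t + f t ⬝ᵥ g') t := by
  have : HasDerivAt (fun τ => ∑ i, f τ i * g τ i)
      (∑ i, (f' i * g t i + f t i * g' i)) t :=
    HasDerivAt.fun_sum (fun i _ => (hf i).mul (hg i))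
  simpa [dotProduct, Finset.sum_add_distrib] using this

lemma hasDerivAt_mulVec {n m : ℕ} {A : ℝ → Matrix (Fin n) (Fin m) ℝ}
    {A' : Matrix (Fin n) (Fin m) ℝ} {v : ℝ → Fin m → ℝ} {v' : Fin m → ℝ} {t : ℝ}
    (hA : ∀ i j, HasDerivAt (fun τ => A τ i j) (A' i j) t)
    (hv : ∀ j, HasDerivAt (fun τ => v τ j) (v' j) t) (i : Fin n) :
    HasDerivAt (fun τ => (A τ *ᵥ v τ) i) ((A' *ᵥ v t + A t *ᵥ v') i) t := by
  have : HasDerivAt (fun τ => ∑ j, A τ i j * v τ j)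
      (∑ j, (A' i j * v t j + A t i j * v' j)) t :=
    HasDerivAt.fun_sum (fun j _ => (hA i j).mul (hv j))
  simpa [mulVec, dotProduct, Finset.sum_add_distrib] using this
theorem lyapunov_derivative_negative {n p : ℕ}
    (M C : ℝ → Matrix (Fin n) (Fin n) ℝ)
    (M' : ℝ → Matrix (Fin n) (Fin n) ℝ)
    (Ks : Matrix (Fin n) (Fin n) ℝ) (Γ : Matrix (Fin p) (Fin p) ℝ)
    (Y : ℝ → Matrix (Fin n) (Fin p) ℝ)
    (P : ℝ → Matrix (Fin n) (Fin n) ℝ)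
    (s s' : ℝ → Fin n → ℝ) (θ : ℝ → Fin p → ℝ)
    (V : ℝ → ℝ)
    (hKs : Ks.PosDef) (hΓ : Γ.PosDef)
    (hMsym : ∀ t, (M t)ᵀ = M t)
    (hPsym : ∀ t, (P t)ᵀ = P t)
    -- differentiability of M, s, θ̃ with the stated derivatives
    (hM' : ∀ t, ∀ i j, HasDerivAt (fun τ => M τ i j) (M' t i j) t)
    (hs : ∀ t, HasDerivAt s (s' t) t)
    (hθ : ∀ t, HasDerivAt θ (-(Γ *ᵥ ((Y t)ᵀ *ᵥ (P t *ᵥ s t)))) t)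
    -- closed-loop identities
    (hloop : ∀ t, M t *ᵥ s' t
      = -(Ks *ᵥ s t) + P t *ᵥ (Y t *ᵥ θ t) - C t *ᵥ s t)
    (hPs : ∀ t, P t *ᵥ s t = s t)
    (hskew : ∀ t, s t ⬝ᵥ ((M' t - (2 : ℝ) • C t) *ᵥ s t) = 0)
    (hV : ∀ t, V t = (1/2) * (s t ⬝ᵥ (M t *ᵥ s t))
      + (1/2) * (θ t ⬝ᵥ (Γ⁻¹ *ᵥ θ t))) :
    ∀ t, HasDerivAt V (-(s t ⬝ᵥ (Ks *ᵥ s t))) t ∧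
      -(s t ⬝ᵥ (Ks *ᵥ s t)) ≤ 0 := by
  -- symmetric matrices give symmetric bilinear forms
  have symdot : ∀ {m : ℕ} (A : Matrix (Fin m) (Fin m) ℝ), Aᵀ = A →
      ∀ u v : Fin m → ℝ, u ⬝ᵥ (A *ᵥ v) = v ⬝ᵥ (A *ᵥ u) := by
    intro m A hA u v
    rw [dotProduct_mulVec, ← hA, vecMul_transpose, dotProduct_comm, hA]
  have hΓsym : Γᵀ = Γ := by
    have := hΓ.isHermitian.eq
    simpa using this
  have hΓinvsym : (Γ⁻¹)ᵀ = Γ⁻¹ := by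
    rw [Matrix.transpose_nonsing_inv, hΓsym]
  have hΓdet : IsUnit Γ.det := isUnit_iff_ne_zero.mpr (ne_of_gt hΓ.det_pos)
  intro t
  set θ' : Fin p → ℝ := -(Γ *ᵥ ((Y t)ᵀ *ᵥ (P t *ᵥ s t))) with hθ'def
  have hsc : ∀ i, HasDerivAt (fun τ => s τ i) (s' t i) t :=
    fun i => hasDerivAt_pi.mp (hs t) i
  have hθc : ∀ i, HasDerivAt (fun τ => θ τ i) (θ' i) t :=
    fun i => hasDerivAt_pi.mp (hθ t) i
  have h1 : HasDerivAt (fun τ => s τ ⬝ᵥ (M τ *ᵥ s τ))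
      (s' t ⬝ᵥ (M t *ᵥ s t) + s t ⬝ᵥ (M' t *ᵥ s t + M t *ᵥ s' t)) t :=
    hasDerivAt_dot hsc (hasDerivAt_mulVec (hM' t) hsc)
  have h0 : ∀ i j, HasDerivAt (fun _ : ℝ => (Γ⁻¹ : Matrix (Fin p) (Fin p) ℝ) i j)
      ((0 : Matrix (Fin p) (Fin p) ℝ) i j) t := fun i j => by
    simpa using hasDerivAt_const t ((Γ⁻¹ : Matrix (Fin p) (Fin p) ℝ) i j)
  have h2 : HasDerivAt (fun τ => θ τ ⬝ᵥ (Γ⁻¹ *ᵥ θ τ))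
      (θ' ⬝ᵥ (Γ⁻¹ *ᵥ θ t) + θ t ⬝ᵥ ((0 : Matrix (Fin p) (Fin p) ℝ) *ᵥ θ t + Γ⁻¹ *ᵥ θ')) t :=
    hasDerivAt_dot hθc (hasDerivAt_mulVec h0 hθc)
  have hVeq : V = fun τ => (1/2) * (s τ ⬝ᵥ (M τ *ᵥ s τ))
      + (1/2) * (θ τ ⬝ᵥ (Γ⁻¹ *ᵥ θ τ)) := funext hV
  have hD := (h1.const_mul (1/2 : ℝ)).add (h2.const_mul (1/2 : ℝ))
  constructor
  · rw [hVeq]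
    refine hD.congr_deriv ?_
    -- now prove the scalar identity
    have e1 : s' t ⬝ᵥ (M t *ᵥ s t) = s t ⬝ᵥ (M t *ᵥ s' t) := symdot (M t) (hMsym t) _ _
    have e2 : s t ⬝ᵥ (M t *ᵥ s' t)
        = -(s t ⬝ᵥ (Ks *ᵥ s t)) + s t ⬝ᵥ (Y t *ᵥ θ t) - s t ⬝ᵥ (C t *ᵥ s t) := by
      rw [hloop t]
      have e3 : s t ⬝ᵥ (P t *ᵥ (Y t *ᵥ θ t)) = s t ⬝ᵥ (Y t *ᵥ θ t) := by
        rw [symdot (P t) (hPsym t), hPs t, dotProduct_comm]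
      rw [dotProduct_sub, dotProduct_add, e3, dotProduct_neg]
    have e4 : s t ⬝ᵥ (M' t *ᵥ s t) = 2 * (s t ⬝ᵥ (C t *ᵥ s t)) := by
      have := hskew t
      rw [Matrix.sub_mulVec, dotProduct_sub, Matrix.smul_mulVec,
        dotProduct_smul] at this
      simp at this
      linarith
    have e5 : θ' ⬝ᵥ (Γ⁻¹ *ᵥ θ t) = θ t ⬝ᵥ (Γ⁻¹ *ᵥ θ') := symdot Γ⁻¹ hΓinvsym _ _
    have e6 : θ t ⬝ᵥ (Γ⁻¹ *ᵥ θ') = -(s t ⬝ᵥ (Y t *ᵥ θ t)) := by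
      rw [hθ'def, Matrix.mulVec_neg, Matrix.mulVec_mulVec,
        Matrix.nonsing_inv_mul Γ hΓdet, Matrix.one_mulVec, hPs t,
        dotProduct_neg, dotProduct_mulVec, vecMul_transpose, dotProduct_comm]
    rw [Matrix.zero_mulVec, zero_add, dotProduct_add, e1, e2, e4, e5, e6]
    ring
  · have h := hKs.posSemidef.dotProduct_mulVec_nonneg (s t)
    simp only [RCLike.star_def, star_trivial] at h
    simpa using neg_nonpos_of_nonneg h
end

section
/- Barbalat-type lemma: if f : ℝ≥0 → ℝⁿ is continuously differentiable, ∫₀^∞ ‖f(t)‖² dt < ∞, and f' is bounded, then f(t) → 0 as t → ∞. -/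
open Matrix MeasureTheory Filter

theorem barbalat_L2_bounded_deriv {n : ℕ}
    (f f' : ℝ → EuclideanSpace ℝ (Fin n))
    (hderiv : ∀ t ≥ (0 : ℝ), HasDerivWithinAt f (f' t) (Set.Ici 0) t)
    (hcont : ContinuousOn f' (Set.Ici 0))
    (hL2 : IntegrableOn (fun t => ‖f t‖ ^ 2) (Set.Ioi (0 : ℝ)))
    (hbound : ∃ B > (0 : ℝ), ∀ t ≥ (0 : ℝ), ‖f' t‖ ≤ B) :
    Tendsto f atTop (nhds 0) := by
  obtain ⟨B, hB, hB'⟩ := hbound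
  by_contra h
  rw [NormedAddCommGroup.tendsto_nhds_zero] at h
  push_neg at h
  obtain ⟨ε, hε, hfreq⟩ := h
  have hfreq' : ∀ T : ℝ, ∃ t ≥ T, ε ≤ ‖f t‖ := by
    intro T
    obtain ⟨t, ht, ht'⟩ := (frequently_atTop.mp hfreq) T
    exact ⟨t, ht, ht'⟩
  set δ : ℝ := ε / (2 * B) with hδdef
  have hδ : 0 < δ := by positivity
  set c : ℝ := ε ^ 2 / 4 * δ with hcdef
  have hc : 0 < c := by positivity
  set I : ℝ := ∫ x in Set.Ioi (0:ℝ), ‖f x‖ ^ 2 with hIdef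
  have hmono : Tendsto (fun t => ∫ x in (0:ℝ)..t, ‖f x‖ ^ 2) atTop (nhds I) :=
    intervalIntegral_tendsto_integral_Ioi 0 hL2 tendsto_id
  have h1 : ∀ᶠ t in atTop, I - c < ∫ x in (0:ℝ)..t, ‖f x‖ ^ 2 :=
    hmono.eventually (eventually_gt_nhds (by linarith))
  obtain ⟨T₀, hT₀⟩ := eventually_atTop.mp h1
  obtain ⟨t, ht, htε⟩ := hfreq' (max T₀ 1)
  have ht1 : (1:ℝ) ≤ t := le_trans (le_max_right _ _) ht
  have ht0 : (0:ℝ) ≤ t := by linarith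
  have hlip : ∀ x ∈ Set.Ici (0:ℝ), ∀ y ∈ Set.Ici (0:ℝ), ‖f y - f x‖ ≤ B * ‖y - x‖ :=
    fun x hx y hy => Convex.norm_image_sub_le_of_norm_hasDerivWithin_le
      (fun s hs => hderiv s hs) (fun s hs => hB' s hs) (convex_Ici 0) hx hy
  have hint1 : IntervalIntegrable (fun x => ‖f x‖ ^ 2) volume 0 t := by
    rw [intervalIntegrable_iff_integrableOn_Ioc_of_le ht0]
    exact hL2.mono_set Set.Ioc_subset_Ioi_self
  have hint2 : IntervalIntegrable (fun x => ‖f x‖ ^ 2) volume t (t + δ) := by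
    rw [intervalIntegrable_iff_integrableOn_Ioc_of_le (by linarith)]
    refine hL2.mono_set ?_
    intro x hx
    exact lt_of_lt_of_le (by linarith) hx.1.le
  have hlow : c ≤ ∫ x in t..(t + δ), ‖f x‖ ^ 2 := by
    have key : ∀ x ∈ Set.Icc t (t + δ), ε ^ 2 / 4 ≤ ‖f x‖ ^ 2 := by
      intro x hx
      have hx0 : x ∈ Set.Ici (0:ℝ) := Set.mem_Ici.mpr (by linarith [hx.1])
      have hdist : ‖f x - f t‖ ≤ B * ‖x - t‖ := hlip t (Set.mem_Ici.mpr ht0) x hx0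
      have hxt : ‖x - t‖ = x - t := by
        rw [Real.norm_eq_abs, abs_of_nonneg (by linarith [hx.1])]
      have hBd : B * (x - t) ≤ ε / 2 := by
        have : x - t ≤ δ := by linarith [hx.2]
        have h2 : B * (x - t) ≤ B * δ := by nlinarith
        have h3 : B * δ = ε / 2 := by
          field_simp [hδdef]
          rw [hδdef]; field_simp
        linarith
      have hnorm : ε / 2 ≤ ‖f x‖ := by
        have htri : ‖f t‖ ≤ ‖f x‖ + ‖f x - f t‖ := by
          have := norm_sub_norm_le (f t) (f x)
          have h4 : ‖f t - f x‖ = ‖f x - f t‖ := norm_sub_rev _ _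
          linarith
        rw [hxt] at hdist
        linarith
      nlinarith [norm_nonneg (f x)]
    have hconst : ∫ x in t..(t + δ), (ε ^ 2 / 4 : ℝ) ≤ ∫ x in t..(t + δ), ‖f x‖ ^ 2 :=
      intervalIntegral.integral_mono_on (by linarith) intervalIntegrable_const hint2 key
    rw [intervalIntegral.integral_const, smul_eq_mul] at hconst
    have : (t + δ - t) * (ε ^ 2 / 4) = c := by rw [hcdef]; ring
    linarith
  have hup : ∫ x in (0:ℝ)..(t + δ), ‖f x‖ ^ 2 ≤ I := by
    rw [intervalIntegral.integral_of_le (by linarith)]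
    refine setIntegral_mono_set hL2 ?_ Set.Ioc_subset_Ioi_self.eventuallyLE
    exact Filter.Eventually.of_forall fun x => sq_nonneg _
  have hsplit : (∫ x in (0:ℝ)..t, ‖f x‖ ^ 2) + ∫ x in t..(t + δ), ‖f x‖ ^ 2
      = ∫ x in (0:ℝ)..(t + δ), ‖f x‖ ^ 2 :=
    intervalIntegral.integral_add_adjacent_intervals hint1 hint2
  have hT := hT₀ t (le_trans (le_max_left _ _) ht)
  linarith
end
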